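/- arXiv:2302.06113 — 9 statements merged into one kernel-verified Lean document; each statement's English description precedes it below -/
import Mathlib

section
/- Let h > 0 and ε > 0 be real numbers, x₀ ∈ ℝ, x₁ = x₀ + h, and u₀, u₁ ∈ ℝ. Define λ₀ = ((1+ε²h²)/(ε²h²))·(u₀ − u₁/√(1+ε²h²)), λ₁ = ((1+ε²h²)/(ε²h²))·(u₁ − u₀/√(1+ε²h²)), and the IMQ interpolant r(x) = λ₀/√(1+ε²(x−x₀)²) + λ₁/√(1+ε²(x−x₁)²). Then the derivative of r at x₀ satisfies r′(x₀) = (u₁·√(1+ε²h²) − u₀)/((1+ε²h²)·h). -/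
lemma imq_term_deriv (ε l c x : ℝ) (hε : 0 < ε) :
    HasDerivAt (fun y => l / Real.sqrt (1 + ε^2*(y - c)^2))
      (-(l * (ε^2*(x - c))) / (Real.sqrt (1 + ε^2*(x - c)^2) * (1 + ε^2*(x - c)^2))) x := by
  have hpos : 0 < 1 + ε^2*(x - c)^2 := by positivity
  have hg : HasDerivAt (fun y => 1 + ε^2*(y - c)^2) (ε^2*(2*(x - c))) x := by
    have h1 : HasDerivAt (fun y : ℝ => (y - c)^2) (2*(x - c)) x := by
      have := ((hasDerivAt_id x).sub_const c).fun_pow 2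
      simpa using this
    simpa using (h1.const_mul (ε^2)).const_add 1
  have hsq : HasDerivAt (fun y => Real.sqrt (1 + ε^2*(y - c)^2))
      (ε^2*(2*(x - c)) / (2 * Real.sqrt (1 + ε^2*(x - c)^2))) x := hg.sqrt (ne_of_gt hpos)
  have hsqrtpos : 0 < Real.sqrt (1 + ε^2*(x - c)^2) := Real.sqrt_pos.mpr hpos
  have hd := (hasDerivAt_const x l).fun_div hsq (ne_of_gt hsqrtpos)
  refine hd.congr_deriv ?_
  have hsq2 : Real.sqrt (1 + ε^2*(x - c)^2) ^ 2 = 1 + ε^2*(x - c)^2 :=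
    Real.sq_sqrt hpos.le
  rw [hsq2]
  field_simp
  ring

/-- Derivative of the two-node IMQ interpolant at the left node. -/
theorem imq_two_point_deriv
    (h ε x₀ u₀ u₁ : ℝ) (hh : 0 < h) (hε : 0 < ε)
    (x₁ : ℝ) (hx₁ : x₁ = x₀ + h)
    (l₀ l₁ : ℝ)
    (hl₀ : l₀ = ((1 + ε^2*h^2)/(ε^2*h^2)) * (u₀ - u₁ / Real.sqrt (1 + ε^2*h^2)))
    (hl₁ : l₁ = ((1 + ε^2*h^2)/(ε^2*h^2)) * (u₁ - u₀ / Real.sqrt (1 + ε^2*h^2)))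
    (r : ℝ → ℝ)
    (hr : r = fun x => l₀ / Real.sqrt (1 + ε^2*(x - x₀)^2)
      + l₁ / Real.sqrt (1 + ε^2*(x - x₁)^2)) :
    deriv r x₀ = (u₁ * Real.sqrt (1 + ε^2*h^2) - u₀) / ((1 + ε^2*h^2) * h) := by
  have h0 := imq_term_deriv ε l₀ x₀ x₀ hε
  have h1 := imq_term_deriv ε l₁ x₁ x₀ hε
  have hR : HasDerivAt r
      (-(l₀ * (ε^2*(x₀ - x₀))) / (Real.sqrt (1 + ε^2*(x₀ - x₀)^2) * (1 + ε^2*(x₀ - x₀)^2))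
      + -(l₁ * (ε^2*(x₀ - x₁))) / (Real.sqrt (1 + ε^2*(x₀ - x₁)^2) * (1 + ε^2*(x₀ - x₁)^2))) x₀ := by
    rw [hr]; exact h0.add h1
  rw [hR.deriv]
  have hx : x₀ - x₁ = -h := by rw [hx₁]; ring
  have hxx : (x₀ - x₁)^2 = h^2 := by rw [hx]; ring
  rw [hx, neg_sq]
  have hS : 0 < 1 + ε^2*h^2 := by positivity
  have hs : 0 < Real.sqrt (1 + ε^2*h^2) := Real.sqrt_pos.mpr hS
  have hsq2 : Real.sqrt (1 + ε^2*h^2) ^ 2 = 1 + ε^2*h^2 := Real.sq_sqrt hS.le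
  rw [hl₁]
  simp only [sub_self, ne_eq, OfNat.ofNat_ne_zero, not_false_eq_true, zero_pow, mul_zero, add_zero, Real.sqrt_one]
  field_simp
  linear_combination (u₀ - u₁ * Real.sqrt (1 + ε^2*h^2)) * hsq2
end

section
/- Let h > 0, x₀ ∈ ℝ, x₁ = x₀ + h, and u₀, u₁ ∈ ℝ. For each ε > 0 let r_ε be the IMQ interpolant r_ε(x) = λ₀(ε)/√(1+ε²(x−x₀)²) + λ₁(ε)/√(1+ε²(x−x₁)²) with λ₀(ε) = ((1+ε²h²)/(ε²h²))·(u₀ − u₁/√(1+ε²h²)) and λ₁(ε) = ((1+ε²h²)/(ε²h²))·(u₁ − u₀/√(1+ε²h²)). Then the derivative r_ε′(x₀) tends to the forward difference (u₁ − u₀)/h as ε → 0⁺. -/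
open Filter Topology

/-- Derivative of a single IMQ basis term `c / sqrt (1 + ε²(x-a)²)` at `x₀`. -/
lemma imq_term_hasDerivAt (ε c a x₀ : ℝ) :
    HasDerivAt (fun x => c / Real.sqrt (1 + ε^2*(x - a)^2))
      ((0 * Real.sqrt (1 + ε^2*(x₀ - a)^2)
        - c * (1 / (2 * Real.sqrt (1 + ε^2*(x₀ - a)^2)) * (ε^2 * (2*(x₀ - a)))))
        / (Real.sqrt (1 + ε^2*(x₀ - a)^2))^2) x₀ := by
  have hq : (0:ℝ) < 1 + ε^2*(x₀ - a)^2 := by positivity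
  have hinner : HasDerivAt (fun x : ℝ => 1 + ε^2*(x - a)^2) (ε^2 * (2*(x₀ - a))) x₀ := by
    have h1 : HasDerivAt (fun x : ℝ => x - a) 1 x₀ := (hasDerivAt_id x₀).sub_const a
    have h2 : HasDerivAt (fun x : ℝ => (x - a)^2) (2*(x₀ - a)) x₀ := by
      simpa using h1.fun_pow 2
    simpa using (h2.const_mul (ε^2)).const_add 1
  have hsqrt : HasDerivAt (fun x : ℝ => Real.sqrt (1 + ε^2*(x - a)^2))
      (1 / (2 * Real.sqrt (1 + ε^2*(x₀ - a)^2)) * (ε^2 * (2*(x₀ - a)))) x₀ :=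
    (Real.hasDerivAt_sqrt hq.ne').comp x₀ hinner
  exact (hasDerivAt_const x₀ c).div hsqrt
    (Real.sqrt_ne_zero'.mpr hq)

/-- As ε → 0⁺, the derivative of the two-node IMQ interpolant at x₀
tends to the forward difference (u₁ − u₀)/h. -/
theorem imq_two_point_deriv_tendsto_forward_difference
    (h x₀ u₀ u₁ : ℝ) (hh : 0 < h) (x₁ : ℝ) (hx₁ : x₁ = x₀ + h) :
    Filter.Tendsto
      (fun ε : ℝ =>
        deriv (fun x =>
          (((1 + ε^2*h^2)/(ε^2*h^2)) * (u₀ - u₁ / Real.sqrt (1 + ε^2*h^2)))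
            / Real.sqrt (1 + ε^2*(x - x₀)^2)
          + (((1 + ε^2*h^2)/(ε^2*h^2)) * (u₁ - u₀ / Real.sqrt (1 + ε^2*h^2)))
            / Real.sqrt (1 + ε^2*(x - x₁)^2)) x₀)
      (𝓝[>] 0) (𝓝 ((u₁ - u₀) / h)) := by
  set F : ℝ → ℝ := fun ε =>
    (u₁ - u₀ / Real.sqrt (1 + ε^2*h^2)) / (h * Real.sqrt (1 + ε^2*h^2)) with hF
  have key : ∀ ε : ℝ, 0 < ε →
      deriv (fun x =>
          (((1 + ε^2*h^2)/(ε^2*h^2)) * (u₀ - u₁ / Real.sqrt (1 + ε^2*h^2)))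
            / Real.sqrt (1 + ε^2*(x - x₀)^2)
          + (((1 + ε^2*h^2)/(ε^2*h^2)) * (u₁ - u₀ / Real.sqrt (1 + ε^2*h^2)))
            / Real.sqrt (1 + ε^2*(x - x₁)^2)) x₀ = F ε := by
    intro ε hε
    have hs : (0:ℝ) < 1 + ε^2*h^2 := by positivity
    have hsq : Real.sqrt (1 + ε^2*h^2) ≠ 0 := (Real.sqrt_pos.mpr hs).ne'
    have hd :=
      ((imq_term_hasDerivAt ε
        (((1 + ε^2*h^2)/(ε^2*h^2)) * (u₀ - u₁ / Real.sqrt (1 + ε^2*h^2))) x₀ x₀).fun_add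
       (imq_term_hasDerivAt ε
        (((1 + ε^2*h^2)/(ε^2*h^2)) * (u₁ - u₀ / Real.sqrt (1 + ε^2*h^2))) x₁ x₀))
    rw [hd.deriv]
    have hx : x₀ - x₁ = -h := by rw [hx₁]; ring
    rw [hx]
    have hsub : x₀ - x₀ = 0 := sub_self x₀
    rw [hsub]
    have hneg : (-h:ℝ)^2 = h^2 := by ring
    rw [hneg]
    have hsq2 : (Real.sqrt (1 + ε^2*h^2))^2 = 1 + ε^2*h^2 := Real.sq_sqrt hs.le
    rw [hF]
    field_simp [hsq2]
    linear_combination (h*u₀ - h*Real.sqrt (1 + ε^2*h^2)*u₁) * Real.sqrt (1 + 0^2*ε^2) ^ 3 * hsq2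
  have hcont : ContinuousAt F 0 := by
    have hg : ContinuousAt (fun ε : ℝ => Real.sqrt (1 + ε^2*h^2)) 0 :=
      (Real.continuous_sqrt.comp (by continuity)).continuousAt
    have hg0 : Real.sqrt (1 + (0:ℝ)^2*h^2) = 1 := by norm_num
    apply ContinuousAt.div
    · exact continuousAt_const.sub (continuousAt_const.div hg (by rw [hg0]; norm_num))
    · exact continuousAt_const.mul hg
    · rw [hg0]; simpa using hh.ne'
  have hF0 : F 0 = (u₁ - u₀) / h := by
    simp [hF]
  have htend : Tendsto F (𝓝[>] (0:ℝ)) (𝓝 ((u₁ - u₀) / h)) := by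
    rw [← hF0]
    exact hcont.continuousWithinAt.tendsto
  refine htend.congr' ?_
  filter_upwards [self_mem_nhdsWithin] with ε hε
  exact (key ε hε).symm
end

section
/- Let h > 0 and ε > 0 be real numbers, x₀ ∈ ℝ, x₁ = x₀ + h, x₂ = x₀ + 2h, and u₀, u₁, u₂ ∈ ℝ. Suppose λ₀, λ₁, λ₂ ∈ ℝ are such that the IMQ interpolant r(x) = λ₀/√(1+ε²(x−x₀)²) + λ₁/√(1+ε²(x−x₁)²) + λ₂/√(1+ε²(x−x₂)²) satisfies r(x_k) = u_k for k = 0, 1, 2. Then the derivative of r at the middle node satisfies r′(x₁) = ((1+4ε²h² + √(1+4ε²h²))/(4h·(1+ε²h²)^{3/2}))·(u₂ − u₀). -/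
lemma rpow_three_halves (d : ℝ) (hd : 0 < d) :
    d ^ ((3:ℝ)/2) = (Real.sqrt d)^3 := by
  rw [Real.sqrt_eq_rpow, ← Real.rpow_natCast (d ^ ((1:ℝ)/2)) 3, ← Real.rpow_mul hd.le]
  norm_num

lemma hasDerivAt_imq (l ε c x : ℝ) :
    HasDerivAt (fun x => l / Real.sqrt (1 + ε^2*(x - c)^2))
      (-(l * ε^2 * (x - c)) / (Real.sqrt (1 + ε^2*(x - c)^2))^3) x := by
  have hg : (0:ℝ) < 1 + ε^2*(x - c)^2 := by positivity
  have hsq : (0:ℝ) < Real.sqrt (1 + ε^2*(x - c)^2) := Real.sqrt_pos.mpr hg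
  have h1 : HasDerivAt (fun x : ℝ => 1 + ε^2*(x - c)^2) (2*ε^2*(x-c)) x := by
    have h2 : HasDerivAt (fun x : ℝ => (x - c)^2) (2*(x-c)) x := by
      simpa using ((hasDerivAt_id x).sub_const c).fun_pow 2
    have := (h2.const_mul (ε^2)).const_add 1
    exact this.congr_deriv (by ring)
  have hs : HasDerivAt (fun x : ℝ => Real.sqrt (1 + ε^2*(x - c)^2))
      (1 / (2 * Real.sqrt (1 + ε^2*(x - c)^2)) * (2*ε^2*(x-c))) x :=
    (Real.hasDerivAt_sqrt hg.ne').comp x h1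
  have hd := (hasDerivAt_const x l).div hs hsq.ne'
  refine hd.congr_deriv ?_
  set S := Real.sqrt (1 + ε^2*(x - c)^2) with hS
  have hS0 : S ≠ 0 := hsq.ne'
  field_simp
  ring

/-- Derivative of the three-node IMQ interpolant at the middle node. -/
theorem imq_three_point_deriv_middle
    (h ε x₀ u₀ u₁ u₂ : ℝ) (hh : 0 < h) (hε : 0 < ε)
    (x₁ x₂ : ℝ) (hx₁ : x₁ = x₀ + h) (hx₂ : x₂ = x₀ + 2*h)
    (l₀ l₁ l₂ : ℝ) (r : ℝ → ℝ)
    (hr : r = fun x => l₀ / Real.sqrt (1 + ε^2*(x - x₀)^2)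
      + l₁ / Real.sqrt (1 + ε^2*(x - x₁)^2)
      + l₂ / Real.sqrt (1 + ε^2*(x - x₂)^2))
    (h0 : r x₀ = u₀) (h1 : r x₁ = u₁) (h2 : r x₂ = u₂) :
    deriv r x₁ =
      ((1 + 4*ε^2*h^2 + Real.sqrt (1 + 4*ε^2*h^2))
        / (4*h*(1 + ε^2*h^2) ^ ((3:ℝ)/2))) * (u₂ - u₀) := by
  subst hx₁ hx₂ hr
  have hdpos : (0:ℝ) < 1 + ε^2*h^2 := by positivity
  have hspos : (0:ℝ) < Real.sqrt (1 + 4*ε^2*h^2) := Real.sqrt_pos.mpr (by positivity)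
  have hApos : (0:ℝ) < Real.sqrt (1 + ε^2*h^2) := Real.sqrt_pos.mpr hdpos
  have hs2 : Real.sqrt (1 + 4*ε^2*h^2)^2 = 1 + 4*ε^2*h^2 := Real.sq_sqrt (by positivity)
  have k1 : 1 + ε^2*(x₀ - x₀)^2 = 1 := by ring
  have k2 : 1 + ε^2*(x₀ - (x₀+h))^2 = 1 + ε^2*h^2 := by ring
  have k3 : 1 + ε^2*(x₀ - (x₀+2*h))^2 = 1 + 4*ε^2*h^2 := by ring
  have m1 : 1 + ε^2*((x₀+2*h) - x₀)^2 = 1 + 4*ε^2*h^2 := by ring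
  have m2 : 1 + ε^2*((x₀+2*h) - (x₀+h))^2 = 1 + ε^2*h^2 := by ring
  have m3 : 1 + ε^2*((x₀+2*h) - (x₀+2*h))^2 = 1 := by ring
  simp only [k1, k2, k3, Real.sqrt_one, div_one] at h0
  simp only [m1, m2, m3, Real.sqrt_one, div_one] at h2
  have H0 := hasDerivAt_imq l₀ ε x₀ (x₀+h)
  have H1 := hasDerivAt_imq l₁ ε (x₀+h) (x₀+h)
  have H2 := hasDerivAt_imq l₂ ε (x₀+2*h) (x₀+h)
  have H := (H0.fun_add H1).fun_add H2
  rw [H.deriv]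
  have n1 : 1 + ε^2*((x₀+h) - x₀)^2 = 1 + ε^2*h^2 := by ring
  have n2 : 1 + ε^2*((x₀+h) - (x₀+h))^2 = 1 := by ring
  have n3 : 1 + ε^2*((x₀+h) - (x₀+2*h))^2 = 1 + ε^2*h^2 := by ring
  have e1 : (x₀+h) - x₀ = h := by ring
  have e2 : (x₀+h) - (x₀+h) = 0 := by ring
  have e3 : (x₀+h) - (x₀+2*h) = -h := by ring
  rw [n1, n2, n3, e1, e2, e3, rpow_three_halves _ hdpos, ← h0, ← h2]
  set A := Real.sqrt (1 + ε^2*h^2) with hA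
  set s := Real.sqrt (1 + 4*ε^2*h^2) with hs
  have hu : (l₀/s + l₁/A + l₂) - (l₀ + l₁/A + l₂/s) = (l₂ - l₀) * (1 - 1/s) := by
    field_simp; ring
  rw [hu]
  have key : (1 + 4*ε^2*h^2 + s) * (1 - 1/s) = 4*ε^2*h^2 := by
    have hC : 1 + 4*ε^2*h^2 = s^2 := hs2.symm
    rw [hC]
    field_simp
    linear_combination hs2
  have : ((1 + 4*ε^2*h^2 + s) / (4*h*A^3)) * ((l₂ - l₀) * (1 - 1/s))
      = (4*ε^2*h^2) * (l₂ - l₀) / (4*h*A^3) := by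
    rw [div_mul_eq_mul_div, mul_comm ((l₂ - l₀)) (1 - 1/s), ← mul_assoc, key]
  rw [this]
  field_simp
  ring
end

section
/- Let h > 0 and ε > 0 be real numbers, x₀ ∈ ℝ, x₁ = x₀ + h, and u₀, u₁ ∈ ℝ. Define λ₀ = ((1+ε²h²)/(ε²h²(2+ε²h²)))·((1+ε²h²)u₀ − u₁), λ₁ = ((1+ε²h²)/(ε²h²(2+ε²h²)))·((1+ε²h²)u₁ − u₀), and the IQ interpolant r(x) = λ₀/(1+ε²(x−x₀)²) + λ₁/(1+ε²(x−x₁)²). Then the derivative of r at x₀ satisfies r′(x₀) = 2·(u₁(1+ε²h²) − u₀)/((1+ε²h²)(2+ε²h²)·h). -/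
lemma iq_term_deriv (c ε a x : ℝ) :
    HasDerivAt (fun y => c / (1 + ε^2*(y - a)^2))
      (-(c * (ε^2 * (2*(x-a)))) / (1 + ε^2*(x - a)^2)^2) x := by
  have hg : HasDerivAt (fun y : ℝ => 1 + ε^2*(y - a)^2) (ε^2 * (2*(x-a))) x := by
    have h1 : HasDerivAt (fun y : ℝ => (y - a)) 1 x := (hasDerivAt_id x).sub_const a
    have h2 : HasDerivAt (fun y : ℝ => (y - a)^2) (2*(x-a)*1) x := by
      simpa using h1.fun_pow 2
    simpa [mul_comm, mul_assoc] using ((h2.const_mul (ε^2)).const_add 1)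
  have hne : (1 + ε^2*(x - a)^2) ≠ 0 := by positivity
  have := (hasDerivAt_const x c).fun_div hg hne
  simpa using this

/-- Derivative of the two-node IQ interpolant at the left node. -/
theorem iq_two_point_deriv
    (h ε x₀ u₀ u₁ : ℝ) (hh : 0 < h) (hε : 0 < ε)
    (x₁ : ℝ) (hx₁ : x₁ = x₀ + h)
    (l₀ l₁ : ℝ)
    (hl₀ : l₀ = ((1 + ε^2*h^2)/(ε^2*h^2*(2 + ε^2*h^2))) * ((1 + ε^2*h^2)*u₀ - u₁))
    (hl₁ : l₁ = ((1 + ε^2*h^2)/(ε^2*h^2*(2 + ε^2*h^2))) * ((1 + ε^2*h^2)*u₁ - u₀))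
    (r : ℝ → ℝ)
    (hr : r = fun x => l₀ / (1 + ε^2*(x - x₀)^2) + l₁ / (1 + ε^2*(x - x₁)^2)) :
    deriv r x₀ = 2*(u₁*(1 + ε^2*h^2) - u₀) / ((1 + ε^2*h^2)*(2 + ε^2*h^2)*h) := by
  have H : HasDerivAt r
      (-(l₀ * (ε^2 * (2*(x₀-x₀)))) / (1 + ε^2*(x₀ - x₀)^2)^2
        + -(l₁ * (ε^2 * (2*(x₀-x₁)))) / (1 + ε^2*(x₀ - x₁)^2)^2) x₀ := by
    rw [hr]
    exact (iq_term_deriv l₀ ε x₀ x₀).add (iq_term_deriv l₁ ε x₁ x₀)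
  rw [H.deriv]
  subst hx₁ hl₀ hl₁
  have h1 : (1:ℝ) + ε^2*h^2 > 0 := by positivity
  have h2 : (2:ℝ) + ε^2*h^2 > 0 := by positivity
  have hx : x₀ - (x₀ + h) = -h := by ring
  rw [hx]
  field_simp
  ring
end

section
/- Let h > 0, x₀ ∈ ℝ, x₁ = x₀ + h, and u₀, u₁ ∈ ℝ. For each ε > 0 let r_ε be the IQ interpolant r_ε(x) = λ₀(ε)/(1+ε²(x−x₀)²) + λ₁(ε)/(1+ε²(x−x₁)²) with λ₀(ε) = ((1+ε²h²)/(ε²h²(2+ε²h²)))·((1+ε²h²)u₀ − u₁) and λ₁(ε) = ((1+ε²h²)/(ε²h²(2+ε²h²)))·((1+ε²h²)u₁ − u₀). Then the derivative r_ε′(x₀) tends to the forward difference (u₁ − u₀)/h as ε → 0⁺. -/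
open Filter Topology

lemma iq_aux_hasDerivAt (A c ε x : ℝ) :
    HasDerivAt (fun x => A / (1 + ε^2*(x - c)^2))
      ((0 * (1 + ε^2*(x - c)^2) - A * (ε^2 * (2 * (x - c)^1 * 1))) / (1 + ε^2*(x - c)^2)^2) x := by
  have h1 : HasDerivAt (fun x : ℝ => x - c) 1 x := (hasDerivAt_id x).sub_const c
  have h2 := h1.pow 2
  have h3 := (h2.const_mul (ε^2)).const_add 1
  exact (hasDerivAt_const x A).div h3 (by positivity)

/-- As ε → 0⁺, the derivative of the two-node IQ interpolant at x₀
tends to the forward difference (u₁ − u₀)/h. -/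
theorem iq_two_point_deriv_tendsto_forward_difference
    (h x₀ u₀ u₁ : ℝ) (hh : 0 < h) (x₁ : ℝ) (hx₁ : x₁ = x₀ + h) :
    Filter.Tendsto
      (fun ε : ℝ =>
        deriv (fun x =>
          (((1 + ε^2*h^2)/(ε^2*h^2*(2 + ε^2*h^2))) * ((1 + ε^2*h^2)*u₀ - u₁))
            / (1 + ε^2*(x - x₀)^2)
          + (((1 + ε^2*h^2)/(ε^2*h^2*(2 + ε^2*h^2))) * ((1 + ε^2*h^2)*u₁ - u₀))
            / (1 + ε^2*(x - x₁)^2)) x₀)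
      (𝓝[>] 0) (𝓝 ((u₁ - u₀) / h)) := by
  have hne : h ≠ 0 := ne_of_gt hh
  set g : ℝ → ℝ := fun ε => 2*((1+ε^2*h^2)*u₁-u₀)/(h*(2+ε^2*h^2)*(1+ε^2*h^2)) with hg
  have key : ∀ ε : ℝ, ε ≠ 0 →
      deriv (fun x =>
          (((1 + ε^2*h^2)/(ε^2*h^2*(2 + ε^2*h^2))) * ((1 + ε^2*h^2)*u₀ - u₁))
            / (1 + ε^2*(x - x₀)^2)
          + (((1 + ε^2*h^2)/(ε^2*h^2*(2 + ε^2*h^2))) * ((1 + ε^2*h^2)*u₁ - u₀))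
            / (1 + ε^2*(x - x₁)^2)) x₀ = g ε := by
    intro ε hε
    have hd := (iq_aux_hasDerivAt
        ((((1 + ε^2*h^2)/(ε^2*h^2*(2 + ε^2*h^2))) * ((1 + ε^2*h^2)*u₀ - u₁))) x₀ ε x₀).add
      (iq_aux_hasDerivAt
        ((((1 + ε^2*h^2)/(ε^2*h^2*(2 + ε^2*h^2))) * ((1 + ε^2*h^2)*u₁ - u₀))) x₁ ε x₀)
    erw [hd.deriv, hg]
    have h01 : x₀ - x₁ = -h := by rw [hx₁]; ring
    rw [h01]
    have hεh : ε^2*h^2 ≠ 0 := by positivity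
    have h2 : (2 + ε^2*h^2) ≠ 0 := by positivity
    have h3 : (1 + ε^2*h^2) ≠ 0 := by positivity
    have h4 : (1 + ε^2*(-h)^2) ≠ 0 := by positivity
    field_simp
    ring
  have heq : ∀ᶠ ε in 𝓝[>] (0:ℝ),
      deriv (fun x =>
          (((1 + ε^2*h^2)/(ε^2*h^2*(2 + ε^2*h^2))) * ((1 + ε^2*h^2)*u₀ - u₁))
            / (1 + ε^2*(x - x₀)^2)
          + (((1 + ε^2*h^2)/(ε^2*h^2*(2 + ε^2*h^2))) * ((1 + ε^2*h^2)*u₁ - u₀))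
            / (1 + ε^2*(x - x₁)^2)) x₀ = g ε := by
    filter_upwards [self_mem_nhdsWithin] with ε hε
    exact key ε (ne_of_gt hε)
  rw [Filter.tendsto_congr' heq]
  have hcont : ContinuousAt g 0 := by
    apply ContinuousAt.div
    · fun_prop
    · fun_prop
    · norm_num
      positivity
  have hg0 : g 0 = (u₁ - u₀)/h := by
    simp only [hg]
    norm_num
    field_simp
  have := hcont.tendsto
  rw [hg0] at this
  exact this.mono_left nhdsWithin_le_nhds
end

section
/- Let h > 0 and ε > 0 be real numbers, x₀ ∈ ℝ, x₁ = x₀ + h, x₂ = x₀ + 2h, and u₀, u₁, u₂ ∈ ℝ. Suppose λ₀, λ₁, λ₂ ∈ ℝ are such that the IQ interpolant r(x) = λ₀/(1+ε²(x−x₀)²) + λ₁/(1+ε²(x−x₁)²) + λ₂/(1+ε²(x−x₂)²) satisfies r(x_k) = u_k for k = 0, 1, 2. Then the derivative of r at the middle node satisfies r′(x₁) = ((1+4ε²h²)/(2h·(1+ε²h²)²))·(u₂ − u₀). -/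
lemma iq_term_hasDeriv (l c ε x : ℝ) :
    HasDerivAt (fun x => l / (1 + ε^2*(x - c)^2))
      (-(l * (ε^2 * (2*(x - c)))) / (1 + ε^2*(x - c)^2)^2) x := by
  have hd : HasDerivAt (fun x => 1 + ε^2*(x - c)^2) (ε^2 * (2*(x - c))) x := by
    have h1 : HasDerivAt (fun x : ℝ => x - c) 1 x := (hasDerivAt_id x).sub_const c
    have h2 : HasDerivAt (fun x : ℝ => (x - c)^2) (2*(x - c)) x := by
      simpa using h1.fun_pow 2
    simpa [mul_comm] using (h2.const_mul (ε^2)).const_add 1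
  have hne : (1 + ε^2*(x - c)^2) ≠ 0 := by positivity
  have := (hasDerivAt_const x l).fun_div hd hne
  simpa using this

/-- Derivative of the three-node IQ interpolant at the middle node. -/
theorem iq_three_point_deriv_middle
    (h ε x₀ u₀ u₁ u₂ : ℝ) (hh : 0 < h) (hε : 0 < ε)
    (x₁ x₂ : ℝ) (hx₁ : x₁ = x₀ + h) (hx₂ : x₂ = x₀ + 2*h)
    (l₀ l₁ l₂ : ℝ) (r : ℝ → ℝ)
    (hr : r = fun x => l₀ / (1 + ε^2*(x - x₀)^2)
      + l₁ / (1 + ε^2*(x - x₁)^2)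
      + l₂ / (1 + ε^2*(x - x₂)^2))
    (h0 : r x₀ = u₀) (h1 : r x₁ = u₁) (h2 : r x₂ = u₂) :
    deriv r x₁ = ((1 + 4*ε^2*h^2) / (2*h*(1 + ε^2*h^2)^2)) * (u₂ - u₀) := by
  subst hr hx₁ hx₂
  have hD : HasDerivAt (fun x => l₀ / (1 + ε^2*(x - x₀)^2)
      + l₁ / (1 + ε^2*(x - (x₀ + h))^2)
      + l₂ / (1 + ε^2*(x - (x₀ + 2*h))^2))
      ((-(l₀ * (ε^2 * (2*((x₀+h) - x₀)))) / (1 + ε^2*((x₀+h) - x₀)^2)^2)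
        + (-(l₁ * (ε^2 * (2*((x₀+h) - (x₀+h))))) / (1 + ε^2*((x₀+h) - (x₀+h))^2)^2)
        + (-(l₂ * (ε^2 * (2*((x₀+h) - (x₀+2*h))))) / (1 + ε^2*((x₀+h) - (x₀+2*h))^2)^2))
      (x₀ + h) :=
    ((iq_term_hasDeriv l₀ x₀ ε _).add (iq_term_hasDeriv l₁ (x₀+h) ε _)).add
      (iq_term_hasDeriv l₂ (x₀+2*h) ε _)
  rw [hD.deriv]
  rw [← h0, ← h2]
  have e1 : (1 : ℝ) + ε^2*h^2 ≠ 0 := by positivity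
  have e2 : (1 : ℝ) + ε^2*(2*h)^2 ≠ 0 := by positivity
  have hne : (2*h*(1 + ε^2*h^2)^2) ≠ 0 := by positivity
  simp only
  have s1 : x₀ + h - x₀ = h := by ring
  have s2 : x₀ + h - (x₀ + h) = 0 := by ring
  have s3 : x₀ + h - (x₀ + 2*h) = -h := by ring
  have s4 : x₀ - x₀ = 0 := by ring
  have s5 : x₀ - (x₀ + h) = -h := by ring
  have s6 : x₀ - (x₀ + 2*h) = -(2*h) := by ring
  have s7 : x₀ + 2*h - x₀ = 2*h := by ring
  have s8 : x₀ + 2*h - (x₀ + h) = h := by ring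
  have s9 : x₀ + 2*h - (x₀ + 2*h) = 0 := by ring
  rw [s1, s2, s3, s4, s5, s6, s7, s8, s9]
  field_simp
  ring
end

section
/- Fix ε > 0 and define, for h > 0, β₀(h) = (√(1+ε²h²)/(ε³h³))·(√(1+ε²h²)·arcsinh(2εh) − (1+√(1+ε²h²))·arcsinh(εh)). Then, as h → 0⁺, β₀(h) = −1/2 + (31/24)ε²h² + O(h⁴); that is, the function h ↦ β₀(h) − (−1/2 + (31/24)ε²h²) is O(h⁴) as h → 0⁺. -/
open Filter Topology Asymptotics


open Filter Topology Asymptotics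

lemma inv_sqrt_taylor (y : ℝ) (h0 : 0 ≤ y) (h1 : y ≤ 1) :
    |(Real.sqrt (1 + y^2))⁻¹ - (1 - y^2/2 + 3*y^4/8)| ≤ y^6 := by
  set w := Real.sqrt (1 + y^2) with hwdef
  have hw2 : w^2 = 1 + y^2 := Real.sq_sqrt (by positivity)
  have hw0 : 0 ≤ w := Real.sqrt_nonneg _
  have hw1 : 1 ≤ w := by nlinarith
  have hwle : w ≤ 1 + y^2/2 := by nlinarith
  have hwpos : (0:ℝ) < w := by linarith
  have hv2 : y^2 = w^2 - 1 := by linarith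
  have key : w⁻¹ - (1 - y^2/2 + 3*y^4/8)
      = -((w-1)^3*(20+15*(w-1)+3*(w-1)^2))/(8*w) := by
    have hv4 : y^4 = (w^2-1)^2 := by rw [show y^4 = (y^2)^2 by ring, hv2]
    rw [hv4, hv2]
    field_simp
    ring
  have hd0 : 0 ≤ w - 1 := by linarith
  have hd : w - 1 ≤ y^2/2 := by linarith
  have hdh : w - 1 ≤ 1/2 := by nlinarith
  have hN0 : 0 ≤ (w-1)^3*(20+15*(w-1)+3*(w-1)^2) := by
    apply mul_nonneg (pow_nonneg hd0 3); nlinarith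
  have hc1 : (w-1)^3 ≤ (y^2/2)^3 := pow_le_pow_left₀ hd0 hd 3
  have hc2 : 20+15*(w-1)+3*(w-1)^2 ≤ 29 := by nlinarith
  rw [key, abs_le]
  constructor
  · rw [neg_div, neg_le_neg_iff, div_le_iff₀ (by linarith)]
    have := mul_le_mul hc1 hc2 (by nlinarith) (by positivity)
    nlinarith
  · rw [neg_div]
    have : 0 ≤ (w-1)^3*(20+15*(w-1)+3*(w-1)^2)/(8*w) := by positivity
    linarith [pow_nonneg h0 6]

lemma arsinh_taylor (x : ℝ) (h0 : 0 ≤ x) (h1 : x ≤ 1) :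
    |Real.arsinh x - (x - x^3/6 + 3*x^5/40)| ≤ x^7 := by
  set f : ℝ → ℝ := fun t => Real.arsinh t - (t - t^3/6 + 3*t^5/40) with hf
  set f' : ℝ → ℝ := fun t => (Real.sqrt (1 + t^2))⁻¹ - (1 - t^2/2 + 3*t^4/8) with hf'
  have hderiv : ∀ y ∈ Set.Icc (0:ℝ) x, HasDerivWithinAt f (f' y) (Set.Icc 0 x) y := by
    intro y _
    have hp : HasDerivAt (fun t:ℝ => t - t^3/6 + 3*t^5/40) (1 - y^2/2 + 3*y^4/8) y := by
      have h3 := hasDerivAt_pow 3 y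
      have h5 := hasDerivAt_pow 5 y
      have := ((hasDerivAt_id y).sub (h3.div_const 6)).add ((h5.const_mul (3:ℝ)).div_const 40)
      refine this.congr_deriv ?_
      push_cast; ring
    exact ((Real.hasDerivAt_arsinh y).sub hp).hasDerivWithinAt
  have hbound : ∀ y ∈ Set.Icc (0:ℝ) x, ‖f' y‖ ≤ x^6 := by
    intro y hy
    have := inv_sqrt_taylor y hy.1 (le_trans hy.2 h1)
    have h6 : y^6 ≤ x^6 := pow_le_pow_left₀ hy.1 hy.2 6
    simpa [hf', Real.norm_eq_abs] using le_trans this h6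
  have := (convex_Icc (0:ℝ) x).norm_image_sub_le_of_norm_hasDerivWithin_le hderiv hbound
    (Set.left_mem_Icc.2 h0) (Set.right_mem_Icc.2 h0)
  have hf0 : f 0 = 0 := by simp [hf, Real.arsinh_zero]
  rw [hf0, sub_zero, sub_zero, Real.norm_eq_abs, Real.norm_eq_abs, abs_of_nonneg h0] at this
  calc |f x| ≤ x^6 * x := this
    _ = x^7 := by ring

set_option maxHeartbeats 1000000 in
/-- Expansion of the IMQ-AB2 coefficient β₀ as h → 0⁺. -/
theorem imq_ab2_beta0_expansion (ε : ℝ) (hε : 0 < ε) :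
    (fun h : ℝ =>
        (Real.sqrt (1 + ε^2*h^2) / (ε^3*h^3)) *
          (Real.sqrt (1 + ε^2*h^2) * Real.arsinh (2*ε*h)
            - (1 + Real.sqrt (1 + ε^2*h^2)) * Real.arsinh (ε*h))
        - (-(1/2) + (31/24)*ε^2*h^2))
      =O[𝓝[>] 0] (fun h : ℝ => h^4) := by
  rw [Asymptotics.isBigO_iff]
  refine ⟨200*ε^4, ?_⟩
  have hδ : (0:ℝ) < 1/(2*ε) := by positivity
  filter_upwards [Ioo_mem_nhdsGT_of_mem (Set.left_mem_Ico.2 hδ)] with h hh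
  obtain ⟨h0, hlt⟩ := hh
  set u := ε*h with hudef
  have hu0 : 0 < u := by positivity
  have hu2 : u ≤ 1/2 := by
    rw [hudef]
    calc ε*h ≤ ε*(1/(2*ε)) := by nlinarith
      _ = 1/2 := by field_simp
  have h2u : 2*u ≤ 1 := by linarith
  have e1 : ε^2*h^2 = u^2 := by rw [hudef]; ring
  have e2 : ε^3*h^3 = u^3 := by rw [hudef]; ring
  have e3 : 2*ε*h = 2*u := by rw [hudef]; ring
  have e4 : 31/24*ε^2*h^2 = 31/24*u^2 := by rw [hudef]; ring
  rw [e1, e2, e3, e4]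
  clear_value u
  -- power bounds
  have hu1 : u ≤ 1 := by linarith
  have hple : ∀ n m : ℕ, m ≤ n → u^n ≤ u^m := fun n m hmn =>
    pow_le_pow_of_le_one hu0.le hu1 hmn
  have hq2 : u^2 ≤ 1/4 := by
    calc u^2 ≤ (1/2)^2 := pow_le_pow_left₀ hu0.le hu2 2
      _ = 1/4 := by norm_num
  have hq4 : u^4 ≤ 1/16 := by
    calc u^4 ≤ (1/2)^4 := pow_le_pow_left₀ hu0.le hu2 4
      _ = 1/16 := by norm_num
  set s := Real.sqrt (1 + u^2) with hsdef
  have hs2 : s^2 = 1 + u^2 := Real.sq_sqrt (by positivity)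
  have hs0 : 0 ≤ s := Real.sqrt_nonneg _
  have hs1 : 1 ≤ s := by nlinarith
  have hsle : s ≤ 1 + u^2/2 := by nlinarith
  clear_value s
  set A1 := Real.arsinh u with hA1def
  set A2 := Real.arsinh (2*u) with hA2def
  set E1 := A1 - (u - u^3/6 + 3*u^5/40) with hE1def
  set E2 := A2 - (2*u - (2*u)^3/6 + 3*(2*u)^5/40) with hE2def
  have hE1 : |E1| ≤ u^7 := by
    rw [hE1def, hA1def]; exact arsinh_taylor u hu0.le hu1
  have hE2 : |E2| ≤ 128*u^7 := by
    have h128 := arsinh_taylor (2*u) (by linarith) h2u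
    rw [hE2def, hA2def]
    calc |Real.arsinh (2*u) - (2*u - (2*u)^3/6 + 3*(2*u)^5/40)| ≤ (2*u)^7 := h128
      _ = 128*u^7 := by ring
  have hA1nn : 0 ≤ A1 := by
    rw [hA1def]; exact Real.arsinh_nonneg_iff.2 hu0.le
  clear_value A1 A2 E1 E2
  -- sqrt remainder
  set Ψ := s - (1 + u^2/2 - u^4/8) with hΨdef
  have hΨ : |Ψ| ≤ u^6 := by
    have key : Ψ = (s-1)^3*(s+3)/8 := by
      have hv2 : u^2 = s^2 - 1 := by linarith
      rw [hΨdef, show u^4 = (u^2)^2 by ring, hv2]; ring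
    have hd0 : 0 ≤ s - 1 := by linarith
    have hd : s - 1 ≤ u^2/2 := by linarith
    have hc1 : (s-1)^3 ≤ (u^2/2)^3 := pow_le_pow_left₀ hd0 hd 3
    have hs3 : s + 3 ≤ 9/2 := by linarith
    have hmul : (s-1)^3*(s+3) ≤ (u^2/2)^3*(9/2) :=
      mul_le_mul hc1 hs3 (by linarith) (by positivity)
    have heq : (u^2/2)^3*(9/2) = 9/16*u^6 := by ring
    have hΨ0 : 0 ≤ Ψ := by rw [key]; positivity
    rw [abs_of_nonneg hΨ0, key]
    have h6 : 0 ≤ u^6 := by positivity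
    linarith
  clear_value Ψ
  have hA1abs : |A1| ≤ 2*u := by
    have hu3le : u^3 ≤ u := by simpa using hple 3 1 (by norm_num)
    have hu5le : u^5 ≤ u^3 := hple 5 3 (by norm_num)
    have hu7le : u^7 ≤ u^3 := hple 7 3 (by norm_num)
    rw [abs_of_nonneg hA1nn]
    rw [abs_le] at hE1
    linarith
  -- rewrite expression
  set g := (1+u^2)*A2 - (s+1+u^2)*A1 + u^3/2 - 31/24*u^5 with hgdef
  clear_value g
  have expr_eq : s/u^3 * (s*A2 - (1+s)*A1) - (-(1/2) + 31/24*u^2) = g/u^3 := by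
    have hstep : s*(s*A2 - (1+s)*A1) = (1+u^2)*A2 - (s+1+u^2)*A1 := by
      linear_combination (A2 - A1) * hs2
    have hu3 : u^3 ≠ 0 := by positivity
    rw [hgdef, div_mul_eq_mul_div, hstep]
    field_simp
    ring
  -- bound on g
  have hgbound : |g| ≤ 200*u^7 := by
    have gid : g = 34/15*u^7 + 3/320*u^9 + (1+u^2)*E2 - (2+3/2*u^2-u^4/8)*E1 - Ψ*A1 := by
      rw [hgdef, hE1def, hE2def, hΨdef]; ring
    have ht1 : |(1+u^2)*E2| ≤ 160*u^7 := by
      rw [abs_mul, abs_of_nonneg (by positivity : (0:ℝ) ≤ 1+u^2)]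
      have := mul_le_mul (show 1+u^2 ≤ 5/4 by linarith) hE2 (abs_nonneg _) (by norm_num)
      linarith
    have ht2 : |(2+3/2*u^2-u^4/8)*E1| ≤ 3*u^7 := by
      rw [abs_mul]
      have hb : |2+3/2*u^2-u^4/8| ≤ 3 := by
        rw [abs_le]
        constructor <;> linarith [pow_nonneg hu0.le 2, pow_nonneg hu0.le 4]
      have := mul_le_mul hb hE1 (abs_nonneg _) (by norm_num)
      linarith
    have ht3 : |Ψ*A1| ≤ 2*u^7 := by
      rw [abs_mul]
      have := mul_le_mul hΨ hA1abs (abs_nonneg _) (by positivity)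
      have heq : u^6*(2*u) = 2*u^7 := by ring
      linarith
    have h9 : u^9 ≤ u^7 := hple 9 7 (by norm_num)
    have h7 : 0 ≤ u^7 := by positivity
    have h9b : (0:ℝ) ≤ u^9 := by positivity
    rw [abs_le] at ht1 ht2 ht3 ⊢
    constructor <;> (rw [gid]; linarith)
  -- conclude
  rw [expr_eq, Real.norm_eq_abs, Real.norm_eq_abs, abs_div,
    abs_of_pos (by positivity : (0:ℝ) < u^3),
    abs_of_pos (by positivity : (0:ℝ) < h^4), div_le_iff₀ (by positivity)]
  calc |g| ≤ 200*u^7 := hgbound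
    _ = 200*ε^4*h^4*u^3 := by rw [hudef]; ring
end

section
/- Fix ε > 0 and define, for h > 0, β₁(h) = (√(1+ε²h²)/(ε³h³))·((1+√(1+ε²h²))·arcsinh(εh) − arcsinh(2εh)). Then, as h → 0⁺, β₁(h) = 3/2 − (41/24)ε²h² + O(h⁴); that is, the function h ↦ β₁(h) − (3/2 − (41/24)ε²h²) is O(h⁴) as h → 0⁺. -/
open Filter Topology Asymptotics

private lemma pow_chain {x : ℝ} (hx0 : 0 ≤ x) (hx : x ≤ 1/4) :
    x^2 ≤ 1/16 ∧ x^3 ≤ (1/16)*x ∧ x^4 ≤ (1/16)*x^2 ∧ x^5 ≤ (1/16)*x^3 ∧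
      x^6 ≤ (1/16)*x^4 ∧ x^7 ≤ (1/16)*x^5 := by
  have h2 : x^2 ≤ 1/16 := by nlinarith
  refine ⟨h2, ?_, ?_, ?_, ?_, ?_⟩
  · nlinarith [mul_le_mul_of_nonneg_right h2 hx0]
  · nlinarith [mul_le_mul_of_nonneg_right h2 (sq_nonneg x)]
  · nlinarith [mul_le_mul_of_nonneg_right h2 (pow_nonneg hx0 3)]
  · nlinarith [mul_le_mul_of_nonneg_right h2 (pow_nonneg hx0 4)]
  · nlinarith [mul_le_mul_of_nonneg_right h2 (pow_nonneg hx0 5)]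

private lemma sqrt_bd {u : ℝ} (hu0 : 0 ≤ u) (hu1 : u ≤ 1) :
    1 + u/2 - u^2/8 ≤ Real.sqrt (1+u) ∧
      Real.sqrt (1+u) ≤ 1 + u/2 - u^2/8 + u^3/16 := by
  have hcube : 0 ≤ u^3 := pow_nonneg hu0 3
  have hm : u^3 * u ≤ u^3 * 1 := mul_le_mul_of_nonneg_left hu1 hcube
  constructor
  · have hp : (0:ℝ) ≤ 1 + u/2 - u^2/8 := by nlinarith
    have h2 : (1 + u/2 - u^2/8)^2 ≤ 1 + u := by nlinarith
    calc 1 + u/2 - u^2/8 = Real.sqrt ((1 + u/2 - u^2/8)^2) := (Real.sqrt_sq hp).symm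
      _ ≤ Real.sqrt (1+u) := Real.sqrt_le_sqrt h2
  · have hq : (0:ℝ) ≤ 1 + u/2 - u^2/8 + u^3/16 := by nlinarith
    have h2 : 1 + u ≤ (1 + u/2 - u^2/8 + u^3/16)^2 := by nlinarith
    calc Real.sqrt (1+u) ≤ Real.sqrt ((1 + u/2 - u^2/8 + u^3/16)^2) := Real.sqrt_le_sqrt h2
      _ = 1 + u/2 - u^2/8 + u^3/16 := Real.sqrt_sq hq

set_option maxHeartbeats 1000000 in
private lemma inv_sqrt_bd {t : ℝ} (ht0 : 0 ≤ t) (ht : t ≤ 1/2) :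
    (Real.sqrt (1+t^2))⁻¹ ≤ 1 - t^2/2 + 3*t^4/8 ∧
      1 - t^2/2 + 3*t^4/8 - (5/16)*t^6 ≤ (Real.sqrt (1+t^2))⁻¹ := by
  have hu0 : (0:ℝ) ≤ t^2 := sq_nonneg t
  have hu1 : t^2 ≤ 1 := by nlinarith
  have ht2 : t^2 ≤ 1/4 := by nlinarith
  obtain ⟨hL, hU⟩ := sqrt_bd hu0 hu1
  set s := Real.sqrt (1+t^2) with hs
  have hq0 : (0:ℝ) ≤ 1 - t^2/2 + 3*t^4/8 := by nlinarith
  have hs1 : (1:ℝ) ≤ s := by nlinarith [pow_nonneg hu0 2, pow_nonneg hu0 3]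
  have hspos : (0:ℝ) < s := lt_of_lt_of_le one_pos hs1
  have hinv : s⁻¹ * s = 1 := inv_mul_cancel₀ (ne_of_gt hspos)
  have hmul1 := mul_le_mul_of_nonneg_left hL hq0
  have hmul2 := mul_le_mul_of_nonneg_left hU hq0
  have hp8 : t^8 ≤ (1/4)*t^6 := by nlinarith [mul_le_mul_of_nonneg_right ht2 (pow_nonneg ht0 6)]
  have hp10 : t^10 ≤ (1/4)*t^8 := by nlinarith [mul_le_mul_of_nonneg_right ht2 (pow_nonneg ht0 8)]
  have hp12 : t^12 ≤ (1/4)*t^10 := by nlinarith [mul_le_mul_of_nonneg_right ht2 (pow_nonneg ht0 10)]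
  have hq1 : 1 ≤ (1 - t^2/2 + 3*t^4/8) * s := by
    nlinarith [hmul1, hp8, pow_nonneg ht0 6]
  have hq2 : (1 - t^2/2 + 3*t^4/8) * s ≤ 1 + (5/16)*t^6 := by
    nlinarith [hmul2, hp8, hp10, hp12, pow_nonneg ht0 8]
  have hipos : (0:ℝ) ≤ s⁻¹ := inv_nonneg.mpr (le_of_lt hspos)
  clear hmul1 hmul2 hp8 hp10 hp12 hL hU
  constructor
  · nlinarith [hq1, hinv, hspos, hipos]
  · nlinarith [hq2, hinv, hspos, hipos, hs1,
      mul_nonneg (by positivity : (0:ℝ) ≤ (5:ℝ)/16 * t^6) (sub_nonneg.mpr hs1)]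

private lemma mono_help {f f' : ℝ → ℝ} (hf : ∀ t, HasDerivAt f (f' t) t)
    (h : ∀ t ∈ Set.Ioo (0:ℝ) (1/2), 0 ≤ f' t) :
    MonotoneOn f (Set.Icc (0:ℝ) (1/2)) := by
  apply monotoneOn_of_deriv_nonneg (convex_Icc _ _)
  · exact fun t _ => (hf t).continuousAt.continuousWithinAt
  · intro t _
    exact ((hf t).differentiableAt).differentiableWithinAt
  · intro t ht
    rw [interior_Icc] at ht
    rw [(hf t).deriv]
    exact h t ht

private lemma arsinh_bd {x : ℝ} (hx0 : 0 ≤ x) (hx : x ≤ 1/2) :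
    x - x^3/6 + 3*x^5/40 - (5/112)*x^7 ≤ Real.arsinh x ∧
      Real.arsinh x ≤ x - x^3/6 + 3*x^5/40 := by
  have hpoly : ∀ t : ℝ, HasDerivAt (fun t : ℝ => t - t^3/6 + 3*t^5/40)
      (1 - t^2/2 + 3*t^4/8) t := by
    intro t
    have h1 : HasDerivAt (fun t : ℝ => t - t^3/6 + 3*t^5/40)
        (1 - (3:ℕ)*t^2/6 + 3*((5:ℕ)*t^4)/40) t :=
      ((hasDerivAt_id t).sub ((hasDerivAt_pow 3 t).div_const 6)).add
        (((hasDerivAt_pow 5 t).const_mul 3).div_const 40)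
    convert h1 using 1
    push_cast; ring
  have hpoly7 : ∀ t : ℝ, HasDerivAt (fun t : ℝ => (5/112)*t^7) ((5/16)*t^6) t := by
    intro t
    have h1 : HasDerivAt (fun t : ℝ => (5/112)*t^7) ((5/112)*((7:ℕ)*t^6)) t :=
      (hasDerivAt_pow 7 t).const_mul (5/112)
    convert h1 using 1
    push_cast; ring
  constructor
  · have hf : ∀ t : ℝ, HasDerivAt
        (fun t => Real.arsinh t - (t - t^3/6 + 3*t^5/40) + (5/112)*t^7)
        ((Real.sqrt (1+t^2))⁻¹ - (1 - t^2/2 + 3*t^4/8) + (5/16)*t^6) t := by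
      intro t
      exact ((Real.hasDerivAt_arsinh t).sub (hpoly t)).add (hpoly7 t)
    have hmono := mono_help hf (by
      intro t ht
      have := (inv_sqrt_bd (le_of_lt ht.1) (le_of_lt ht.2)).2
      linarith)
    have h := hmono (Set.mem_Icc.mpr ⟨le_refl 0, by norm_num⟩)
      (Set.mem_Icc.mpr ⟨hx0, hx⟩) hx0
    simp only [Real.arsinh_zero] at h
    norm_num at h
    linarith [h]
  · have hf : ∀ t : ℝ, HasDerivAt
        (fun t => (t - t^3/6 + 3*t^5/40) - Real.arsinh t)
        ((1 - t^2/2 + 3*t^4/8) - (Real.sqrt (1+t^2))⁻¹) t := by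
      intro t
      exact (hpoly t).sub (Real.hasDerivAt_arsinh t)
    have hmono := mono_help hf (by
      intro t ht
      have := (inv_sqrt_bd (le_of_lt ht.1) (le_of_lt ht.2)).1
      linarith)
    have h := hmono (Set.mem_Icc.mpr ⟨le_refl 0, by norm_num⟩)
      (Set.mem_Icc.mpr ⟨hx0, hx⟩) hx0
    simp only [Real.arsinh_zero] at h
    norm_num at h
    linarith [h]

set_option maxHeartbeats 1000000 in
private lemma key_bd {x : ℝ} (hx0 : 0 < x) (hx : x ≤ 1/4) :
    |Real.sqrt (1+x^2) * ((1 + Real.sqrt (1+x^2)) * Real.arsinh x - Real.arsinh (2*x))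
      - ((3/2)*x^3 - (41/24)*x^5)| ≤ 50 * x^7 := by
  have hx0' : (0:ℝ) ≤ x := le_of_lt hx0
  obtain ⟨c2, c3, c4, c5, c6, c7⟩ := pow_chain hx0' hx
  have n1 : (0:ℝ) ≤ x := hx0'
  have n3 : (0:ℝ) ≤ x^3 := pow_nonneg hx0' 3
  have n5 : (0:ℝ) ≤ x^5 := pow_nonneg hx0' 5
  have n6 : (0:ℝ) ≤ x^6 := pow_nonneg hx0' 6
  have n7 : (0:ℝ) ≤ x^7 := pow_nonneg hx0' 7
  have n2 : (0:ℝ) ≤ x^2 := sq_nonneg x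
  have n4 : (0:ℝ) ≤ x^4 := pow_nonneg hx0' 4
  -- polynomial facts
  have p1 : (0:ℝ) ≤ x^2/2 - x^4/8 := by linarith
  have p2 : x^2/2 - x^4/8 + x^6/16 ≤ 1 := by linarith
  have p3 : (0:ℝ) ≤ x - x^3/6 + 3*x^5/40 - (5/112)*x^7 := by linarith
  have p4 : x - x^3/6 + 3*x^5/40 ≤ x := by linarith
  have p5 : (0:ℝ) ≤ 2*x - (4/3)*x^3 + (12/5)*x^5 - (640/112)*x^7 := by linarith
  have p6 : 2*x - (4/3)*x^3 + (12/5)*x^5 ≤ 2*x := by linarith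
  have p7a : -(163/120)*x^7 + (157/480)*x^9 - (23/1920)*x^11 + (3/2560)*x^13 ≤ 2*x^7 := by
    nlinarith [pow_nonneg hx0' 9, pow_nonneg hx0' 11, pow_nonneg hx0' 13,
      mul_le_mul_of_nonneg_right c2 (pow_nonneg hx0' 7),
      mul_le_mul_of_nonneg_right c2 (pow_nonneg hx0' 9),
      mul_le_mul_of_nonneg_right c2 (pow_nonneg hx0' 11)]
  have p7b : -(2:ℝ)*x^7 ≤ -(163/120)*x^7 + (157/480)*x^9 - (23/1920)*x^11 + (3/2560)*x^13 := by
    nlinarith [pow_nonneg hx0' 9, pow_nonneg hx0' 11, pow_nonneg hx0' 13,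
      mul_le_mul_of_nonneg_right c2 (pow_nonneg hx0' 7),
      mul_le_mul_of_nonneg_right c2 (pow_nonneg hx0' 9),
      mul_le_mul_of_nonneg_right c2 (pow_nonneg hx0' 11)]
  -- bounds on s, A, B
  obtain ⟨hsL, hsU⟩ := sqrt_bd (sq_nonneg x) (by linarith : x^2 ≤ 1)
  obtain ⟨hAL, hAU⟩ := arsinh_bd hx0' (by linarith : x ≤ 1/2)
  obtain ⟨hBL, hBU⟩ := arsinh_bd (by linarith : (0:ℝ) ≤ 2*x) (by linarith : 2*x ≤ 1/2)
  have e1 : (x^2)^2 = x^4 := by ring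
  have e2 : (x^2)^3 = x^6 := by ring
  rw [e1] at hsL hsU
  rw [e2] at hsU
  have eB1 : 2*x - (2*x)^3/6 + 3*(2*x)^5/40 = 2*x - (4/3)*x^3 + (12/5)*x^5 := by ring
  have eB2 : (5/112)*(2*x)^7 = (640/112)*x^7 := by ring
  rw [eB1] at hBU
  rw [eB1, eB2] at hBL
  set s := Real.sqrt (1+x^2) with hs
  set A := Real.arsinh x with hA
  set B := Real.arsinh (2*x) with hB
  have hs1 : (1:ℝ) ≤ s := by linarith
  have hs2 : s ≤ 2 := by linarith
  have hA0 : 0 ≤ A := by linarith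
  have hA1 : A ≤ x := by linarith
  have hB0 : 0 ≤ B := by linarith
  have hB1 : B ≤ 2*x := by linarith
  set Ps : ℝ := 1 + x^2/2 - x^4/8 with hPs
  set PA : ℝ := x - x^3/6 + 3*x^5/40 with hPA
  set PB : ℝ := 2*x - (4/3)*x^3 + (12/5)*x^5 with hPB
  set es : ℝ := s - Ps with hes
  set ea : ℝ := A - PA with hea
  set eb : ℝ := B - PB with heb
  set T : ℝ := (1 + s) * A - B with hT
  clear_value s A B Ps PA PB es ea eb T
  have habs_es : |es| ≤ x^6/16 := abs_le.mpr ⟨by rw [hes]; linarith, by rw [hes]; linarith⟩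
  have habs_ea : |ea| ≤ (5/112)*x^7 := abs_le.mpr ⟨by rw [hea]; linarith, by rw [hea]; linarith⟩
  have habs_eb : |eb| ≤ 6*x^7 := abs_le.mpr ⟨by rw [heb]; linarith, by rw [heb]; linarith⟩
  have hprodA : (1 + s) * A ≤ 3 * A := mul_le_mul_of_nonneg_right (by linarith) hA0
  have hprodA0 : 0 ≤ (1 + s) * A := mul_nonneg (by linarith) hA0
  have habs_T : |T| ≤ 3*x := abs_le.mpr ⟨by rw [hT]; linarith, by rw [hT]; linarith⟩
  have hPs1 : (1:ℝ) ≤ Ps := by rw [hPs]; linarith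
  have hPs2 : Ps ≤ 2 := by rw [hPs]; linarith
  have hPA0 : 0 ≤ PA := by rw [hPA]; linarith
  have hPA1 : PA ≤ x := by rw [hPA]; linarith
  have hN : s * T - ((3/2)*x^3 - (41/24)*x^5)
      = (-(163/120)*x^7 + (157/480)*x^9 - (23/1920)*x^11 + (3/2560)*x^13)
        + es * T + Ps * ((1 + s) * ea + es * PA - eb) := by
    rw [hT, hes, hea, heb, hPs, hPA, hPB]; ring
  rw [hN]
  set R : ℝ := -(163/120)*x^7 + (157/480)*x^9 - (23/1920)*x^11 + (3/2560)*x^13 with hR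
  have h1 : |R| ≤ 2*x^7 := abs_le.mpr ⟨by linarith, by linarith⟩
  have h2 : |es * T| ≤ (3/16)*x^7 := by
    rw [abs_mul]
    calc |es| * |T| ≤ (x^6/16) * (3*x) :=
          mul_le_mul habs_es habs_T (abs_nonneg _) (by positivity)
      _ = (3/16)*x^7 := by ring
  have h3 : |(1 + s) * ea| ≤ 3 * ((5/112)*x^7) := by
    rw [abs_mul]
    apply mul_le_mul _ habs_ea (abs_nonneg _) (by norm_num)
    rw [abs_of_nonneg (by linarith : (0:ℝ) ≤ 1 + s)]; linarith
  have h4 : |es * PA| ≤ (1/16)*x^7 := by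
    rw [abs_mul]
    calc |es| * |PA| ≤ (x^6/16) * x := by
          apply mul_le_mul habs_es _ (abs_nonneg _) (by positivity)
          rw [abs_of_nonneg hPA0]; exact hPA1
      _ = (1/16)*x^7 := by ring
  have hM : |(1 + s) * ea + es * PA - eb| ≤ 3*((5/112)*x^7) + (1/16)*x^7 + 6*x^7 := by
    have t1 : |(1 + s) * ea + es * PA - eb| ≤ |(1 + s) * ea + es * PA| + |eb| := by
      have := abs_add_le ((1 + s) * ea + es * PA) (-eb)
      rw [abs_neg] at this
      calc |(1 + s) * ea + es * PA - eb| = |(1 + s) * ea + es * PA + -eb| := by ring_nf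
        _ ≤ |(1 + s) * ea + es * PA| + |eb| := this
    have t2 := abs_add_le ((1 + s) * ea) (es * PA)
    linarith
  have h5 : |Ps * ((1 + s) * ea + es * PA - eb)| ≤ 2 * (3*((5/112)*x^7) + (1/16)*x^7 + 6*x^7) := by
    rw [abs_mul]
    apply mul_le_mul _ hM (abs_nonneg _) (by norm_num)
    rw [abs_of_nonneg (by linarith : (0:ℝ) ≤ Ps)]; exact hPs2
  have t1 := abs_add_le (R + es * T) (Ps * ((1 + s) * ea + es * PA - eb))
  have t2 := abs_add_le R (es * T)
  linarith

/-- Expansion of the IMQ-AB2 coefficient β₁ as h → 0⁺. -/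
theorem imq_ab2_beta1_expansion (ε : ℝ) (hε : 0 < ε) :
    (fun h : ℝ =>
        (Real.sqrt (1 + ε^2*h^2) / (ε^3*h^3)) *
          ((1 + Real.sqrt (1 + ε^2*h^2)) * Real.arsinh (ε*h)
            - Real.arsinh (2*ε*h))
        - (3/2 - (41/24)*ε^2*h^2))
      =O[𝓝[>] 0] (fun h : ℝ => h^4) := by
  rw [isBigO_iff]
  refine ⟨50 * ε^4, ?_⟩
  have hmem : Set.Ioo (0:ℝ) (1/(4*ε)) ∈ 𝓝[>] (0:ℝ) :=
    Ioo_mem_nhdsGT_of_mem (Set.mem_Ico.mpr ⟨le_refl 0, by positivity⟩)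
  filter_upwards [hmem] with h hh
  obtain ⟨hh0, hh1⟩ := hh
  have h4ε : (0:ℝ) < 4*ε := by positivity
  rw [lt_div_iff₀ h4ε] at hh1
  have hx0 : 0 < ε * h := mul_pos hε hh0
  have hx4 : ε * h ≤ 1/4 := by nlinarith
  have key := key_bd hx0 hx4
  have hrw1 : ε^2*h^2 = (ε*h)^2 := by ring
  have hrw2 : ε^3*h^3 = (ε*h)^3 := by ring
  have hrw3 : 2*ε*h = 2*(ε*h) := by ring
  rw [hrw1, hrw2, hrw3]
  set x := ε * h with hx
  have hrw0 : (41:ℝ)/24*ε^2*h^2 = 41/24*x^2 := by rw [hx]; ring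
  rw [hrw0]
  have hx3 : (0:ℝ) < x^3 := by positivity
  have heq : Real.sqrt (1 + x^2) / x^3 *
        ((1 + Real.sqrt (1 + x^2)) * Real.arsinh x - Real.arsinh (2*x))
        - (3/2 - 41/24*x^2)
      = (Real.sqrt (1+x^2) * ((1 + Real.sqrt (1+x^2)) * Real.arsinh x - Real.arsinh (2*x))
          - ((3/2)*x^3 - (41/24)*x^5)) / x^3 := by
    field_simp
  rw [heq]
  rw [Real.norm_eq_abs, Real.norm_eq_abs, abs_div, abs_of_pos hx3]
  rw [div_le_iff₀ hx3]
  calc |Real.sqrt (1+x^2) * ((1 + Real.sqrt (1+x^2)) * Real.arsinh x - Real.arsinh (2*x))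
        - ((3/2)*x^3 - (41/24)*x^5)| ≤ 50 * x^7 := key
    _ = 50 * ε^4 * |h^4| * x^3 := by
        rw [abs_of_nonneg (by positivity : (0:ℝ) ≤ h^4), hx]; ring
end

section
/- Fix ε > 0 and define, for h > 0, β(h) = ((ε²h² − √(ε²h²+1) + 1)·arcsinh(εh))/(ε³h³). Then, as h → 0⁺, β(h) = 1/2 + ε²h²/24 + O(h⁴); that is, the function h ↦ β(h) − (1/2 + ε²h²/24) is O(h⁴) as h → 0⁺. -/
open Filter Topology Asymptotics

set_option maxHeartbeats 1000000

lemma imq_inv_sqrt_lower (x : ℝ) : 1 - x^2/2 ≤ (Real.sqrt (1 + x^2))⁻¹ := by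
  have hs : 0 < Real.sqrt (1 + x^2) := Real.sqrt_pos.2 (by positivity)
  have hsq : (Real.sqrt (1 + x^2))^2 = 1 + x^2 := Real.sq_sqrt (by positivity)
  rw [inv_eq_one_div, le_div_iff₀ hs]
  rcases le_or_gt (1 - x^2/2) 0 with h | h
  · nlinarith [mul_nonpos_of_nonpos_of_nonneg h hs.le]
  · nlinarith [sq_nonneg ((1 - x^2/2) * Real.sqrt (1 + x^2) - 1),
      mul_pos h hs, sq_nonneg x, sq_nonneg (x^2)]

lemma imq_inv_sqrt_upper (x : ℝ) : (Real.sqrt (1 + x^2))⁻¹ ≤ 1 - x^2/2 + 3*x^4/8 := by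
  have hs : 0 < Real.sqrt (1 + x^2) := Real.sqrt_pos.2 (by positivity)
  have hsq : (Real.sqrt (1 + x^2))^2 = 1 + x^2 := Real.sq_sqrt (by positivity)
  have hp : 0 < 1 - x^2/2 + 3*x^4/8 := by nlinarith [sq_nonneg (x^2 - 4/3)]
  rw [inv_eq_one_div, div_le_iff₀ hs]
  have key : 1 ≤ ((1 - x^2/2 + 3*x^4/8) * Real.sqrt (1 + x^2))^2 := by
    have : ((1 - x^2/2 + 3*x^4/8) * Real.sqrt (1 + x^2))^2
        = (1 - x^2/2 + 3*x^4/8)^2 * (1 + x^2) := by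
      rw [mul_pow, hsq]
    rw [this]
    nlinarith [mul_nonneg (mul_nonneg (mul_nonneg (sq_nonneg x) (sq_nonneg x)) (sq_nonneg x))
      (sq_nonneg (x^2 - 5/6)), mul_nonneg (mul_nonneg (sq_nonneg x) (sq_nonneg x)) (sq_nonneg x)]
  nlinarith [mul_pos hp hs, key]

lemma imq_arsinh_lower {x : ℝ} (hx : 0 ≤ x) : x - x^3/6 ≤ Real.arsinh x := by
  have hmono : Monotone (fun y : ℝ => Real.arsinh y - (y - y^3/6)) := by
    apply monotone_of_hasDerivAt_nonneg
      (f' := fun y : ℝ => (Real.sqrt (1 + y^2))⁻¹ - (1 - y^2/2))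
    · intro y
      have h1 : HasDerivAt (fun y : ℝ => y - y^3/6) (1 - y^2/2) y := by
        have := (hasDerivAt_id y).sub ((hasDerivAt_pow 3 y).div_const 6)
        exact this.congr_deriv (by norm_num; ring)
      exact (Real.hasDerivAt_arsinh y).sub h1
    · intro y
      simpa using sub_nonneg.2 (imq_inv_sqrt_lower y)
  have := hmono hx
  simpa [Real.arsinh_zero] using this

lemma imq_arsinh_upper {x : ℝ} (hx : 0 ≤ x) :
    Real.arsinh x ≤ x - x^3/6 + 3*x^5/40 := by
  have hmono : Monotone (fun y : ℝ => (y - y^3/6 + 3*y^5/40) - Real.arsinh y) := by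
    apply monotone_of_hasDerivAt_nonneg
      (f' := fun y : ℝ => (1 - y^2/2 + 3*y^4/8) - (Real.sqrt (1 + y^2))⁻¹)
    · intro y
      have h1 : HasDerivAt (fun y : ℝ => y - y^3/6 + 3*y^5/40) (1 - y^2/2 + 3*y^4/8) y := by
        have := ((hasDerivAt_id y).sub ((hasDerivAt_pow 3 y).div_const 6)).add
          (((hasDerivAt_pow 5 y).const_mul 3).div_const 40)
        exact this.congr_deriv (by norm_num; ring)
      exact h1.sub (Real.hasDerivAt_arsinh y)
    · intro y
      simpa using sub_nonneg.2 (imq_inv_sqrt_upper y)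
  have := hmono hx
  simpa [Real.arsinh_zero] using this

/-- Expansion of the IMQ-AM coefficient β as h → 0⁺. -/
theorem imq_am_beta_expansion (ε : ℝ) (hε : 0 < ε) :
    (fun h : ℝ =>
        ((ε^2*h^2 - Real.sqrt (ε^2*h^2 + 1) + 1) * Real.arsinh (ε*h)) / (ε^3*h^3)
        - (1/2 + ε^2*h^2/24))
      =O[𝓝[>] 0] (fun h : ℝ => h^4) := by
  rw [isBigO_iff]
  refine ⟨2*ε^4, ?_⟩
  have hδ : (0:ℝ) < min 1 ε⁻¹ := lt_min one_pos (inv_pos.2 hε)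
  filter_upwards [Ioo_mem_nhdsGT hδ] with h hh
  obtain ⟨hh0, hh1⟩ := hh
  set x : ℝ := ε * h with hxdef
  have hx0 : 0 < x := mul_pos hε hh0
  have hx1 : x ≤ 1 := by
    have : h < ε⁻¹ := lt_of_lt_of_le hh1 (min_le_right _ _)
    calc x = ε * h := rfl
    _ ≤ ε * ε⁻¹ := by nlinarith
    _ = 1 := mul_inv_cancel₀ hε.ne'
  have e2 : ε^2*h^2 = x^2 := by rw [hxdef]; ring
  have e3 : ε^3*h^3 = x^3 := by rw [hxdef]; ring
  rw [e2, e3]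
  set s : ℝ := Real.sqrt (x^2 + 1) with hsdef
  have hs0 : 0 < s := Real.sqrt_pos.2 (by positivity)
  have hs2 : s^2 = x^2 + 1 := Real.sq_sqrt (by positivity)
  have hs1 : 1 ≤ s := by nlinarith
  have hs32 : s ≤ 3/2 := by nlinarith
  have ha_lo : x - x^3/6 ≤ Real.arsinh x := imq_arsinh_lower hx0.le
  have ha_hi : Real.arsinh x ≤ x - x^3/6 + 3*x^5/40 := imq_arsinh_upper hx0.le
  set a : ℝ := Real.arsinh x
  have hx3 : (0:ℝ) < x^3 := by positivity
  have hsum : (0:ℝ) < s + 1 := by linarith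
  have hid : (x^2 - s + 1)*(s+1) = s*x^2 := by
    rw [show x^2 = s^2 - 1 by linarith]; ring
  -- key algebraic bounds corresponding to s/(s+1) ≈ 1/2 + x²/8:
  have h_up : 8*s ≤ (4 + x^2)*(s+1) := by
    nlinarith [mul_nonneg (sub_nonneg.2 hs1) (sq_nonneg (s+1))]
  have h_lo : (4 + x^2 - 8*x^4)*(s+1) ≤ 8*s := by
    nlinarith [sq_nonneg (s-1), mul_nonneg (sq_nonneg (s-1)) (sub_nonneg.2 hs1)]
  have hW : (0:ℝ) ≤ 1 - x^2/6 + 3*x^4/40 := by nlinarith [sq_nonneg x, sq_nonneg (x^2)]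
  have hW2 : (0:ℝ) ≤ 1 - x^2/6 := by nlinarith
  have hx6 : x^6 ≤ x^4 := by nlinarith [pow_pos hx0 4]
  -- upper bound
  have hβub : (x^2 - s + 1)*a ≤ (1/2 + x^2/24 + 2*x^4)*x^3 := by
    have u1 : (x^2 - s + 1)*a*(s+1) ≤ s*x^2*(x - x^3/6 + 3*x^5/40) := by
      rw [mul_right_comm, hid]
      exact mul_le_mul_of_nonneg_left ha_hi (by positivity)
    have t := mul_le_mul_of_nonneg_right h_up (mul_nonneg (pow_nonneg hx0.le 3) hW)
    have hpoly : (0:ℝ) ≤ 2*x^4 - x^4/60 - 3*x^6/320 := by nlinarith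
    have hp2 : (0:ℝ) ≤ x^3*(s+1)*(2*x^4 - x^4/60 - 3*x^6/320) :=
      mul_nonneg (mul_nonneg hx3.le hsum.le) hpoly
    have u2 : s*x^2*(x - x^3/6 + 3*x^5/40) ≤ ((1/2 + x^2/24 + 2*x^4)*x^3)*(s+1) := by
      nlinarith [t, hp2]
    have := le_of_mul_le_mul_right (by linarith : (x^2 - s + 1)*a*(s+1)
      ≤ ((1/2 + x^2/24 + 2*x^4)*x^3)*(s+1)) hsum
    linarith
  -- lower bound
  have hβlb : (1/2 + x^2/24 - 2*x^4)*x^3 ≤ (x^2 - s + 1)*a := by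
    have l1 : s*x^2*(x - x^3/6) ≤ (x^2 - s + 1)*a*(s+1) := by
      rw [mul_right_comm (x^2 - s + 1) a (s+1), hid]
      exact mul_le_mul_of_nonneg_left ha_lo (by positivity)
    have t := mul_le_mul_of_nonneg_right h_lo (mul_nonneg (pow_nonneg hx0.le 3) hW2)
    have hpoly2 : (0:ℝ) ≤ x^4 - x^4/48 + x^6/6 := by nlinarith [pow_pos hx0 6]
    have hp3 : (0:ℝ) ≤ x^3*(s+1)*(x^4 - x^4/48 + x^6/6) :=
      mul_nonneg (mul_nonneg hx3.le hsum.le) hpoly2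
    have l2 : ((1/2 + x^2/24 - 2*x^4)*x^3)*(s+1) ≤ s*x^2*(x - x^3/6) := by
      nlinarith [t, hp3]
    have := le_of_mul_le_mul_right (by linarith : ((1/2 + x^2/24 - 2*x^4)*x^3)*(s+1)
      ≤ (x^2 - s + 1)*a*(s+1)) hsum
    linarith
  have habs : |h^4| = h^4 := abs_of_nonneg (by positivity)
  rw [Real.norm_eq_abs, Real.norm_eq_abs, habs]
  have hx4 : 2*ε^4*h^4 = 2*x^4 := by rw [hxdef]; ring
  rw [hx4, abs_le]
  constructor
  · have h1 : (1/2 + x^2/24 - 2*x^4) ≤ (x^2 - s + 1)*a/x^3 := by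
      rw [le_div_iff₀ hx3]; linarith
    linarith
  · have h2 : (x^2 - s + 1)*a/x^3 ≤ 1/2 + x^2/24 + 2*x^4 := by
      rw [div_le_iff₀ hx3]; linarith
    linarith
end
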